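/- For every nonempty subset S of X with |S| ≤ n, there exists a profile u such that the maximin choice set at u is exactly S. -/

import Mathlib

open Finset

/-- The worst (largest) rank of `x` over all individuals, where ranks are
counted from 1 at the top: `n(u,x)`.  A profile assigns to each individual
`i` a rank equivalence `u i : Fin m ≃ Fin m` (lower rank = better). -/
def worstRank {m n : ℕ} (u : Fin n → (Fin m ≃ Fin m)) (x : Fin m) : ℕ :=
  univ.sup (fun i : Fin n => ((u i) x).val + 1)

/-- The maximin choice set `G_M(u)`: alternatives whose worst rank is minimal. -/
def maximinSet {m n : ℕ} (u : Fin n → (Fin m ≃ Fin m)) : Finset (Fin m) :=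
  univ.filter (fun x => ∀ y : Fin m, worstRank u x ≤ worstRank u y)

/-- For every nonempty subset `S` of `X` with `|S| ≤ n`, there is a profile `u`
whose maximin choice set is exactly `S`. -/
theorem maximin_range (m n : ℕ) (hm : 3 ≤ m) (hn : 2 ≤ n)
    (S : Finset (Fin m)) (hS : S.Nonempty) (hcard : S.card ≤ n) :
    ∃ u : Fin n → (Fin m ≃ Fin m), maximinSet u = S := by
  classical
  set k := S.card with hkdef
  have hk0 : 0 < k := Finset.card_pos.mpr hS
  haveI : NeZero k := ⟨hk0.ne'⟩
  have hSm : k ≤ m := by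
    calc k ≤ (univ : Finset (Fin m)).card := Finset.card_le_univ S
    _ = m := by simp
  have hmk : k + (m - k) = m := Nat.add_sub_cancel' hSm
  let eS : {x : Fin m // x ∈ S} ≃ Fin k := S.equivFin
  have hcC : Fintype.card {x : Fin m // ¬ x ∈ S} = m - k := by
    rw [Fintype.card_subtype_compl]
    simp [hkdef]
  let eC : {x : Fin m // ¬ x ∈ S} ≃ Fin (m - k) := Fintype.equivFinOfCardEq hcC
  let c : Fin n → Fin k := fun i => ⟨i.val % k, Nat.mod_lt _ hk0⟩
  let u : Fin n → (Fin m ≃ Fin m) := fun i =>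
    (Equiv.sumCompl (· ∈ S)).symm.trans
      ((Equiv.sumCongr (eS.trans (Equiv.addLeft (c i))) eC).trans
        (finSumFinEquiv.trans (finCongr hmk)))
  have hvalS : ∀ (i : Fin n) (x : Fin m) (hx : x ∈ S),
      ((u i) x).val = (c i + eS ⟨x, hx⟩).val := by
    intro i x hx
    simp [u, Equiv.sumCompl_symm_apply_of_pos hx]
  have hvalC : ∀ (i : Fin n) (x : Fin m) (hx : ¬ x ∈ S),
      ((u i) x).val = k + (eC ⟨x, hx⟩).val := by
    intro i x hx
    simp [u, Equiv.sumCompl_symm_apply_of_neg hx]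
  have hwS : ∀ x ∈ S, worstRank u x = k := by
    intro x hx
    apply le_antisymm
    · apply Finset.sup_le
      intro i _
      rw [hvalS i x hx]
      exact Nat.succ_le_of_lt (c i + eS ⟨x, hx⟩).isLt
    · -- pick i with c i = ⟨k-1⟩ - eS x
      set a : Fin k := eS ⟨x, hx⟩
      set d : Fin k := ⟨k - 1, Nat.sub_lt hk0 one_pos⟩ - a
      have hdn : d.val < n := lt_of_lt_of_le d.isLt (le_trans hcard (le_refl n))
      let i : Fin n := ⟨d.val, hdn⟩
      have hci : c i = d := by
        simp only [c, i]
        ext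
        simp [Nat.mod_eq_of_lt d.isLt]
      have : ((u i) x).val + 1 = k := by
        rw [hvalS i x hx, hci]
        have : d + a = ⟨k - 1, Nat.sub_lt hk0 one_pos⟩ := by
          simp [d]
        rw [this]
        simp
        omega
      calc k = ((u i) x).val + 1 := this.symm
      _ ≤ worstRank u x := Finset.le_sup (f := fun j => ((u j) x).val + 1) (Finset.mem_univ i)
  have hwC : ∀ x ∉ S, k + 1 ≤ worstRank u x := by
    intro x hx
    have hn0 : 0 < n := by omega
    let i0 : Fin n := ⟨0, hn0⟩
    calc k + 1 ≤ ((u i0) x).val + 1 := by rw [hvalC i0 x hx]; omega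
    _ ≤ worstRank u x := Finset.le_sup (f := fun j => ((u j) x).val + 1) (Finset.mem_univ i0)
  refine ⟨u, ?_⟩
  ext x
  simp only [maximinSet, Finset.mem_filter, Finset.mem_univ, true_and]
  constructor
  · intro h
    by_contra hx
    obtain ⟨y, hy⟩ := hS
    have := h y
    rw [hwS y hy] at this
    have := hwC x hx
    omega
  · intro hx y
    rw [hwS x hx]
    by_cases hy : y ∈ S
    · rw [hwS y hy]
    · have := hwC y hy; omega
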